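/- Suppose z ≠ x_1, 1 + β·x_1 ≠ 0, 1 + β·z + γ·z² ≠ 0, 1 − γ·z·w_1 ≠ 0, 1 − γ·w_1·x_1 ≠ 0, 1 − γ·x_1·w_1 ≠ 0, and 1 + β·x_1 + γ·z·x_1 ≠ 0. Then [1/(1+βz+γz²)] · E(z,w_1)/E(z, ι(x_1)) = 1/(1+βz+γz²) + γ·w_1·(x_1 + w_1 + β·x_1·w_1)/((1 − γ·w_1·x_1)·(1 − γ·w_1·z)) + E(x_1,w_1)/(z − x_1). (Here E(z, ι(x_1)) = (z − x_1)/(1 + β·x_1 + γ·z·x_1) and P(z) := 1+βz+γz² is the series P_F for the elliptic formal group law; w_1 plays the role of [t]ι(x_1).) -/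

import Mathlib

set_option maxHeartbeats 4000000


/-- Remark 6, elliptic case: with
`E(a,b) = (a + b + βab)/(1 - γab)` and `ι(x₁) = -x₁/(1+βx₁)`:
`(1/(1+βz+γz²)) · E(z,w₁)/E(z,ι(x₁))
  = 1/(1+βz+γz²) + γw₁(x₁+w₁+βx₁w₁)/((1-γw₁x₁)(1-γw₁z)) + E(x₁,w₁)/(z-x₁)`. -/
theorem stmt14 {K : Type*} [Field K] (β γ x₁ w₁ z : K)
    (E : K → K → K)
    (hE : ∀ a b, E a b = (a + b + β * a * b) / (1 - γ * a * b))
    (ι : K → K)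
    (hι : ι x₁ = -x₁ / (1 + β * x₁))
    (hzx : z ≠ x₁)
    (hx1 : 1 + β * x₁ ≠ 0)
    (hP : 1 + β * z + γ * z ^ 2 ≠ 0)
    (h1 : 1 - γ * z * w₁ ≠ 0)
    (h2 : 1 - γ * w₁ * x₁ ≠ 0)
    (h3 : 1 - γ * x₁ * w₁ ≠ 0)
    (h4 : 1 + β * x₁ + γ * z * x₁ ≠ 0) :
    (1 / (1 + β * z + γ * z ^ 2)) * (E z w₁ / E z (ι x₁))
      = 1 / (1 + β * z + γ * z ^ 2)
        + γ * w₁ * (x₁ + w₁ + β * x₁ * w₁) / ((1 - γ * w₁ * x₁) * (1 - γ * w₁ * z))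
        + E x₁ w₁ / (z - x₁) := by
  have hz : z - x₁ ≠ 0 := sub_ne_zero.mpr hzx
  have key : E z (ι x₁) = (z - x₁) / (1 + β * x₁ + γ * z * x₁) := by
    rw [hE, hι]
    have hden : 1 - γ * z * (-x₁ / (1 + β * x₁))
        = (1 + β * x₁ + γ * z * x₁) / (1 + β * x₁) := by
      rw [mul_div_assoc', sub_div' hx1]
      ring
    have hnum : z + -x₁ / (1 + β * x₁) + β * z * (-x₁ / (1 + β * x₁))
        = (z - x₁) / (1 + β * x₁) := by
      rw [mul_div_assoc', add_assoc, ← add_div, add_div' _ _ _ hx1]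
      ring
    rw [hden, hnum, div_div_div_eq, mul_comm ((1:K)+β*x₁), ← div_div_div_eq, div_self hx1, div_one]
  rw [key, hE, hE]
  have hkey : (z - x₁) / (1 + β * x₁ + γ * z * x₁) ≠ 0 :=
    div_ne_zero hz h4
  have h1' : 1 - γ * w₁ * z ≠ 0 := by
    rw [show γ * w₁ * z = γ * z * w₁ by ring]; exact h1
  rw [div_div_eq_mul_div, div_add_div _ _ hP (mul_ne_zero h2 h1'), div_div, div_add_div _ _ (mul_ne_zero hP (mul_ne_zero h2 h1')) (mul_ne_zero h3 hz),
    div_mul_div_comm, div_mul_eq_mul_div, mul_div_assoc', div_div, div_eq_div_iff (mul_ne_zero h1 (mul_ne_zero hP hz)) (mul_ne_zero (mul_ne_zero hP (mul_ne_zero h2 h1')) (mul_ne_zero h3 hz))]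
  ring
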